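/- If a series ∑ a_j of complex numbers is Cesàro summable with Cesàro sum S, then it is Abel summable with Abel sum S: lim_{r→1−} ∑_{j=0}^∞ a_j r^j = S. -/

import Mathlib

open Finset Filter

set_option maxHeartbeats 1000000

theorem abel_summable_of_cesaro_summable (a : ℕ → ℂ) (S : ℂ)
    (h : Filter.Tendsto
      (fun n => (∑ l ∈ Finset.range (n + 1), ∑ j ∈ Finset.range (l + 1), a j) / ((n : ℂ) + 1))
      Filter.atTop (nhds S)) :
    (∀ r : ℝ, 0 ≤ r → r < 1 → Summable (fun j : ℕ => a j * (r : ℂ) ^ j)) ∧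
    Filter.Tendsto (fun r : ℝ => ∑' j : ℕ, a j * (r : ℂ) ^ j)
      (nhdsWithin 1 (Set.Ico (0 : ℝ) 1)) (nhds S) := by
  set b : ℕ → ℂ := fun l => ∑ j ∈ Finset.range (l + 1), a j with hbdef
  set c : ℕ → ℂ := fun n => ∑ l ∈ Finset.range (n + 1), b l with hcdef
  have hces : Filter.Tendsto (fun n => c n / ((n : ℂ) + 1)) Filter.atTop (nhds S) := h
  have hnnorm : ∀ n : ℕ, ‖((n : ℂ) + 1)‖ = (n : ℝ) + 1 := by
    intro n
    have : ((n : ℂ) + 1) = (((n : ℕ) + 1 : ℕ) : ℂ) := by push_cast; ring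
    rw [this, Complex.norm_natCast]; push_cast; ring
  -- c is O(n+1)
  obtain ⟨B, hB0, hB⟩ : ∃ B : ℝ, 0 ≤ B ∧ ∀ n, ‖c n‖ ≤ B * ((n : ℝ) + 1) := by
    obtain ⟨B, hB⟩ := (hces.norm).bddAbove_range
    refine ⟨B, ?_, fun n => ?_⟩
    · exact le_trans (norm_nonneg _) (hB ⟨0, rfl⟩)
    · have h1 : ‖c n / ((n : ℂ) + 1)‖ ≤ B := hB ⟨n, rfl⟩
      rw [norm_div, hnnorm] at h1
      have h2 : (0 : ℝ) < (n : ℝ) + 1 := by positivity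
      calc ‖c n‖ = ‖c n‖ / ((n : ℝ) + 1) * ((n : ℝ) + 1) := by field_simp
        _ ≤ B * ((n : ℝ) + 1) := by
            apply mul_le_mul_of_nonneg_right h1 (le_of_lt h2)
  -- relations between a, b, c
  have hbc : ∀ n, b (n + 1) = c (n + 1) - c n := by
    intro n
    have : c (n + 1) = c n + b (n + 1) := by
      simp [hcdef, Finset.sum_range_succ]
    rw [this]; ring
  have hab : ∀ n, a (n + 1) = b (n + 1) - b n := by
    intro n
    have : b (n + 1) = b n + a (n + 1) := by
      simp [hbdef, Finset.sum_range_succ]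
    rw [this]; ring
  have ha0 : a 0 = c 0 := by simp [hcdef, hbdef]
  have ha1 : a 1 = c 1 - 2 * c 0 := by
    have h1 := hab 0
    have h2 := hbc 0
    have h3 : b 0 = c 0 := by simp [hcdef]
    rw [h2, h3] at h1; rw [h1]; ring
  have ha2 : ∀ n, a (n + 2) = c (n + 2) - 2 * c (n + 1) + c n := by
    intro n
    have h1 := hab (n + 1)
    rw [hbc (n + 1), hbc n] at h1
    rw [h1]; ring
  -- bound on a
  have haB : ∀ n : ℕ, ‖a n‖ ≤ 4 * B * ((n : ℝ) + 1) := by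
    intro n
    match n with
    | 0 =>
      rw [ha0]
      have := hB 0; push_cast at this ⊢; nlinarith
    | 1 =>
      rw [ha1]
      have h1 : ‖c 1 - 2 * c 0‖ ≤ ‖c 1‖ + 2 * ‖c 0‖ := by
        calc ‖c 1 - 2 * c 0‖ ≤ ‖c 1‖ + ‖(2 : ℂ) * c 0‖ := norm_sub_le _ _
          _ = ‖c 1‖ + 2 * ‖c 0‖ := by rw [norm_mul]; norm_num
      have h2 := hB 0; have h3 := hB 1
      push_cast at h2 h3 ⊢; nlinarith
    | (n + 2) =>
      rw [ha2 n]
      have h1 : ‖c (n + 2) - 2 * c (n + 1) + c n‖ ≤ ‖c (n + 2)‖ + 2 * ‖c (n + 1)‖ + ‖c n‖ := by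
        calc ‖c (n + 2) - 2 * c (n + 1) + c n‖
            ≤ ‖c (n + 2) - 2 * c (n + 1)‖ + ‖c n‖ := norm_add_le _ _
          _ ≤ ‖c (n + 2)‖ + ‖(2 : ℂ) * c (n + 1)‖ + ‖c n‖ := by
              have := norm_sub_le (c (n + 2)) (2 * c (n + 1)); linarith
          _ = ‖c (n + 2)‖ + 2 * ‖c (n + 1)‖ + ‖c n‖ := by rw [norm_mul]; norm_num
      have h2 := hB n; have h3 := hB (n + 1); have h4 := hB (n + 2)
      push_cast at h2 h3 h4 ⊢; nlinarith
  -- summability of (n+1) r^n for 0 ≤ r < 1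
  have hNsum : ∀ r : ℝ, 0 ≤ r → r < 1 → Summable (fun n : ℕ => ((n : ℝ) + 1) * r ^ n) := by
    intro r h0 h1
    have hr : ‖r‖ < 1 := by rwa [Real.norm_eq_abs, abs_of_nonneg h0]
    have hs1 : Summable (fun n : ℕ => (n : ℝ) * r ^ n) := by
      have := summable_pow_mul_geometric_of_norm_lt_one (R := ℝ) 1 hr
      simpa using this
    have hs2 : Summable (fun n : ℕ => r ^ n) := summable_geometric_of_lt_one h0 h1
    have := hs1.add hs2
    refine this.congr fun n => ?_
    ring
  -- summability of norms of a_j x^j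
  have hsumnorm : ∀ r : ℝ, 0 ≤ r → r < 1 → Summable (fun j : ℕ => ‖a j * (r : ℂ) ^ j‖) := by
    intro r h0 h1
    refine Summable.of_nonneg_of_le (fun n => norm_nonneg _) (fun n => ?_)
      ((hNsum r h0 h1).mul_left (4 * B))
    rw [norm_mul, norm_pow, Complex.norm_real, Real.norm_eq_abs, abs_of_nonneg h0]
    calc ‖a n‖ * r ^ n ≤ (4 * B * ((n : ℝ) + 1)) * r ^ n := by
          apply mul_le_mul_of_nonneg_right (haB n) (by positivity)
      _ = 4 * B * (((n : ℝ) + 1) * r ^ n) := by ring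
  refine ⟨fun r h0 h1 => (hsumnorm r h0 h1).of_norm, ?_⟩
  -- E n = c n - (n+1) S, the error coefficients
  set E : ℕ → ℂ := fun n => c n - ((n : ℂ) + 1) * S with hEdef
  -- ‖E n‖ eventually small
  have hEsmall : ∀ δ : ℝ, 0 < δ → ∃ N : ℕ, ∀ n ≥ N, ‖E n‖ ≤ δ * ((n : ℝ) + 1) := by
    intro δ hδ
    have h1 : Filter.Tendsto (fun n => ‖c n / ((n : ℂ) + 1) - S‖) Filter.atTop (nhds 0) := by
      have := (hces.sub_const S).norm
      simpa using this
    have h2 : ∀ᶠ n in Filter.atTop, ‖c n / ((n : ℂ) + 1) - S‖ < δ :=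
      h1.eventually (gt_mem_nhds hδ)
    obtain ⟨N, hN⟩ := Filter.eventually_atTop.mp h2
    refine ⟨N, fun n hn => ?_⟩
    have hne : ((n : ℂ) + 1) ≠ 0 := by
      have : ((n : ℂ) + 1) = (((n + 1 : ℕ)) : ℂ) := by push_cast; ring
      rw [this]
      exact Nat.cast_ne_zero.mpr (Nat.succ_ne_zero n)
    have key : E n = ((n : ℂ) + 1) * (c n / ((n : ℂ) + 1) - S) := by
      field_simp [hEdef]
      rfl
    rw [key, norm_mul, hnnorm]
    have := le_of_lt (hN n hn)
    calc ((n : ℝ) + 1) * ‖c n / ((n : ℂ) + 1) - S‖ ≤ ((n : ℝ) + 1) * δ := by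
          apply mul_le_mul_of_nonneg_left this (by positivity)
      _ = δ * ((n : ℝ) + 1) := by ring
  -- main identity for each fixed r
  have hkey : ∀ r : ℝ, 0 ≤ r → r < 1 →
      (∑' j : ℕ, a j * (r : ℂ) ^ j) - S
        = ((1 : ℂ) - (r : ℂ)) ^ 2 * ∑' n : ℕ, E n * (r : ℂ) ^ n := by
    intro r h0 h1
    set x : ℂ := (r : ℂ) with hxdef
    have hx1 : ‖x‖ < 1 := by
      rw [hxdef, Complex.norm_real, Real.norm_eq_abs, abs_of_nonneg h0]; exact h1
    have hgeo : Summable (fun n : ℕ => ‖x ^ n‖) := by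
      refine Summable.congr (f := fun n : ℕ => r ^ n) (summable_geometric_of_lt_one h0 h1) ?_
      intro n
      rw [norm_pow, hxdef, Complex.norm_real, Real.norm_eq_abs, abs_of_nonneg h0]
    have hSa : Summable (fun j : ℕ => ‖a j * x ^ j‖) := hsumnorm r h0 h1
    -- Cauchy product 1 : (∑ a_j x^j) (∑ x^n) = ∑ b_n x^n
    have inner1 : ∀ n : ℕ, ∑ k ∈ Finset.range (n + 1), (a k * x ^ k) * x ^ (n - k)
        = b n * x ^ n := by
      intro n
      rw [hbdef]
      simp only []
      rw [Finset.sum_mul]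
      apply Finset.sum_congr rfl
      intro k hk
      have hkn : k ≤ n := Nat.lt_succ_iff.mp (Finset.mem_range.mp hk)
      rw [mul_assoc, ← pow_add, Nat.add_sub_cancel' hkn]
    have hC1 : (∑' j : ℕ, a j * x ^ j) * (∑' n : ℕ, x ^ n) = ∑' n : ℕ, b n * x ^ n := by
      rw [tsum_mul_tsum_eq_tsum_sum_range_of_summable_norm hSa hgeo]
      exact tsum_congr inner1
    have hSb : Summable (fun n : ℕ => ‖b n * x ^ n‖) := by
      have := summable_norm_sum_mul_range_of_summable_norm hSa hgeo
      refine this.congr fun n => ?_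
      rw [inner1 n]
    -- Cauchy product 2 : (∑ b_n x^n) (∑ x^n) = ∑ c_n x^n
    have inner2 : ∀ n : ℕ, ∑ k ∈ Finset.range (n + 1), (b k * x ^ k) * x ^ (n - k)
        = c n * x ^ n := by
      intro n
      rw [hcdef]
      simp only []
      rw [Finset.sum_mul]
      apply Finset.sum_congr rfl
      intro k hk
      have hkn : k ≤ n := Nat.lt_succ_iff.mp (Finset.mem_range.mp hk)
      rw [mul_assoc, ← pow_add, Nat.add_sub_cancel' hkn]
    have hC2 : (∑' n : ℕ, b n * x ^ n) * (∑' n : ℕ, x ^ n) = ∑' n : ℕ, c n * x ^ n := by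
      rw [tsum_mul_tsum_eq_tsum_sum_range_of_summable_norm hSb hgeo]
      exact tsum_congr inner2
    have hSc : Summable (fun n : ℕ => ‖c n * x ^ n‖) := by
      have := summable_norm_sum_mul_range_of_summable_norm hSb hgeo
      refine this.congr fun n => ?_
      rw [inner2 n]
    -- Cauchy product 3 : (∑ x^n)(∑ x^n) = ∑ (n+1) x^n
    have inner3 : ∀ n : ℕ, ∑ k ∈ Finset.range (n + 1), x ^ k * x ^ (n - k)
        = ((n : ℂ) + 1) * x ^ n := by
      intro n
      have : ∀ k ∈ Finset.range (n + 1), x ^ k * x ^ (n - k) = x ^ n := by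
        intro k hk
        have hkn : k ≤ n := Nat.lt_succ_iff.mp (Finset.mem_range.mp hk)
        rw [← pow_add, Nat.add_sub_cancel' hkn]
      rw [Finset.sum_congr rfl this, Finset.sum_const, Finset.card_range]
      ring
    have hC3 : (∑' n : ℕ, x ^ n) * (∑' n : ℕ, x ^ n) = ∑' n : ℕ, ((n : ℂ) + 1) * x ^ n := by
      rw [tsum_mul_tsum_eq_tsum_sum_range_of_summable_norm hgeo hgeo]
      exact tsum_congr inner3
    have hSN : Summable (fun n : ℕ => ‖((n : ℂ) + 1) * x ^ n‖) := by
      have := summable_norm_sum_mul_range_of_summable_norm hgeo hgeo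
      refine this.congr fun n => ?_
      rw [inner3 n]
    -- geometric sums
    have hxne : (1 : ℂ) - x ≠ 0 := by
      rw [hxdef]
      have : (1 : ℂ) - (r : ℂ) = ((1 - r : ℝ) : ℂ) := by push_cast; ring
      rw [this]
      exact_mod_cast ne_of_gt (by linarith : (0 : ℝ) < 1 - r)
    have hG : ((1 : ℂ) - x) * (∑' n : ℕ, x ^ n) = 1 := by
      rw [tsum_geometric_of_norm_lt_one hx1]
      exact mul_inv_cancel₀ hxne
    -- tsum of E
    have hE : ∑' n : ℕ, E n * x ^ n
        = (∑' n : ℕ, c n * x ^ n) - S * ∑' n : ℕ, ((n : ℂ) + 1) * x ^ n := by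
      rw [← tsum_mul_left]
      rw [← Summable.tsum_sub hSc.of_norm (hSN.of_norm.mul_left S)]
      apply tsum_congr
      intro n
      rw [hEdef]; ring
    rw [hE, ← hC2, ← hC1, ← hC3]
    set G : ℂ := ∑' n : ℕ, x ^ n
    set A : ℂ := ∑' j : ℕ, a j * x ^ j
    linear_combination (-(A - S) * (1 + (1 - x) * G)) * hG
  -- real weighted geometric sum
  have hNtsum : ∀ r : ℝ, 0 ≤ r → r < 1 →
      ∑' n : ℕ, ((n : ℝ) + 1) * r ^ n = ((1 - r) ^ 2)⁻¹ := by
    intro r h0 h1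
    have hr : ‖r‖ < 1 := by rwa [Real.norm_eq_abs, abs_of_nonneg h0]
    have hs1 : Summable (fun n : ℕ => (n : ℝ) * r ^ n) := by
      simpa using summable_pow_mul_geometric_of_norm_lt_one (R := ℝ) 1 hr
    have hs2 : Summable (fun n : ℕ => r ^ n) := summable_geometric_of_lt_one h0 h1
    have hsplit : ∑' n : ℕ, ((n : ℝ) + 1) * r ^ n
        = (∑' n : ℕ, (n : ℝ) * r ^ n) + ∑' n : ℕ, r ^ n := by
      rw [← Summable.tsum_add hs1 hs2]; apply tsum_congr; intro n; ring
    rw [hsplit, tsum_coe_mul_geometric_of_norm_lt_one hr, tsum_geometric_of_lt_one h0 h1]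
    have hne : (1 : ℝ) - r ≠ 0 := ne_of_gt (by linarith)
    field_simp
    ring
  rw [Metric.tendsto_nhdsWithin_nhds]
  intro ε hε
  obtain ⟨N, hN⟩ := hEsmall (ε / 4) (by positivity)
  set C : ℝ := ∑ n ∈ Finset.range N, ‖E n‖ with hCdef
  have hC0 : 0 ≤ C := Finset.sum_nonneg fun n _ => norm_nonneg _
  refine ⟨min 1 (ε / (2 * (C + 1))), by positivity, ?_⟩
  rintro r ⟨h0, h1⟩ hd
  have hd1 : 1 - r < min 1 (ε / (2 * (C + 1))) := by
    rwa [Real.dist_eq, abs_of_nonpos (by linarith : r - 1 ≤ 0), neg_sub] at hd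
  have h1r : (0 : ℝ) < 1 - r := by linarith
  have hne : (1 : ℝ) - r ≠ 0 := ne_of_gt h1r
  -- summability of ‖E n‖ r^n
  have hEsum : Summable (fun n : ℕ => ‖E n‖ * r ^ n) := by
    refine Summable.of_nonneg_of_le (fun n => by positivity) (fun n => ?_)
      ((hNsum r h0 h1).mul_left (B + ‖S‖))
    have hEb : ‖E n‖ ≤ (B + ‖S‖) * ((n : ℝ) + 1) := by
      calc ‖E n‖ ≤ ‖c n‖ + ‖((n : ℂ) + 1) * S‖ := norm_sub_le _ _
        _ = ‖c n‖ + ((n : ℝ) + 1) * ‖S‖ := by rw [norm_mul, hnnorm]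
        _ ≤ B * ((n : ℝ) + 1) + ((n : ℝ) + 1) * ‖S‖ := by linarith [hB n]
        _ = (B + ‖S‖) * ((n : ℝ) + 1) := by ring
    have hrn : (0 : ℝ) ≤ r ^ n := by positivity
    calc ‖E n‖ * r ^ n ≤ ((B + ‖S‖) * ((n : ℝ) + 1)) * r ^ n :=
          mul_le_mul_of_nonneg_right hEb hrn
      _ = (B + ‖S‖) * (((n : ℝ) + 1) * r ^ n) := by ring
  have hEnorm : ∀ n : ℕ, ‖E n * (r : ℂ) ^ n‖ = ‖E n‖ * r ^ n := by
    intro n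
    rw [norm_mul, norm_pow, Complex.norm_real, Real.norm_eq_abs, abs_of_nonneg h0]
  have hEsum' : Summable (fun n : ℕ => ‖E n * (r : ℂ) ^ n‖) :=
    hEsum.congr fun n => (hEnorm n).symm
  -- head bound
  have hhead : ∑ n ∈ Finset.range N, ‖E n‖ * r ^ n ≤ C := by
    apply Finset.sum_le_sum
    intro n _
    have hr1 : r ^ n ≤ 1 := pow_le_one₀ h0 (le_of_lt h1)
    nlinarith [norm_nonneg (E n)]
  -- tail bound
  have f0sum : Summable (fun m : ℕ => ε / 4 * (((m : ℝ) + 1) * r ^ m)) :=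
    (hNsum r h0 h1).mul_left (ε / 4)
  have htail : ∑' n : ℕ, ‖E (n + N)‖ * r ^ (n + N)
      ≤ ε / 4 * ((1 - r) ^ 2)⁻¹ := by
    have step1 : ∑' n : ℕ, ‖E (n + N)‖ * r ^ (n + N)
        ≤ ∑' n : ℕ, ε / 4 * ((((n + N : ℕ) : ℝ) + 1) * r ^ (n + N)) := by
      refine Summable.tsum_le_tsum (fun n => ?_)
        ((summable_nat_add_iff (f := fun n => ‖E n‖ * r ^ n) N).mpr hEsum)
        ((summable_nat_add_iff (f := fun m : ℕ => ε / 4 * (((m : ℝ) + 1) * r ^ m)) N).mpr f0sum)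
      have hEN := hN (n + N) (Nat.le_add_left N n)
      have hrn : (0 : ℝ) ≤ r ^ (n + N) := by positivity
      calc ‖E (n + N)‖ * r ^ (n + N)
          ≤ (ε / 4 * (((n + N : ℕ) : ℝ) + 1)) * r ^ (n + N) :=
            mul_le_mul_of_nonneg_right hEN hrn
        _ = ε / 4 * ((((n + N : ℕ) : ℝ) + 1) * r ^ (n + N)) := by ring
    have step2 : ∑' n : ℕ, ε / 4 * ((((n + N : ℕ) : ℝ) + 1) * r ^ (n + N))
        ≤ ∑' m : ℕ, ε / 4 * (((m : ℝ) + 1) * r ^ m) := by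
      have hsplit := Summable.sum_add_tsum_nat_add N f0sum
      have hpos : 0 ≤ ∑ m ∈ Finset.range N, ε / 4 * (((m : ℝ) + 1) * r ^ m) :=
        Finset.sum_nonneg fun m _ => by positivity
      push_cast
      push_cast at hsplit
      linarith
    have step3 : ∑' m : ℕ, ε / 4 * (((m : ℝ) + 1) * r ^ m) = ε / 4 * ((1 - r) ^ 2)⁻¹ := by
      rw [tsum_mul_left, hNtsum r h0 h1]
    calc ∑' n : ℕ, ‖E (n + N)‖ * r ^ (n + N)
        ≤ ∑' n : ℕ, ε / 4 * ((((n + N : ℕ) : ℝ) + 1) * r ^ (n + N)) := step1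
      _ ≤ ∑' m : ℕ, ε / 4 * (((m : ℝ) + 1) * r ^ m) := step2
      _ = ε / 4 * ((1 - r) ^ 2)⁻¹ := step3
  -- assemble
  have hTbound : ‖∑' n : ℕ, E n * (r : ℂ) ^ n‖ ≤ C + ε / 4 * ((1 - r) ^ 2)⁻¹ := by
    calc ‖∑' n : ℕ, E n * (r : ℂ) ^ n‖ ≤ ∑' n : ℕ, ‖E n * (r : ℂ) ^ n‖ :=
          norm_tsum_le_tsum_norm hEsum'
      _ = ∑' n : ℕ, ‖E n‖ * r ^ n := tsum_congr hEnorm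
      _ = (∑ n ∈ Finset.range N, ‖E n‖ * r ^ n) + ∑' n : ℕ, ‖E (n + N)‖ * r ^ (n + N) :=
          (Summable.sum_add_tsum_nat_add N hEsum).symm
      _ ≤ C + ε / 4 * ((1 - r) ^ 2)⁻¹ := add_le_add hhead htail
  have hnormx : ‖(1 : ℂ) - (r : ℂ)‖ = 1 - r := by
    have : (1 : ℂ) - (r : ℂ) = ((1 - r : ℝ) : ℂ) := by push_cast; ring
    rw [this, Complex.norm_real, Real.norm_eq_abs, abs_of_nonneg (le_of_lt h1r)]
  rw [dist_eq_norm, hkey r h0 h1, norm_mul, norm_pow, hnormx]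
  set T : ℝ := ‖∑' n : ℕ, E n * (r : ℂ) ^ n‖ with hTdef
  have hTnn : 0 ≤ T := norm_nonneg _
  have hle1 : 1 - r ≤ 1 := (lt_of_lt_of_le hd1 (min_le_left _ _)).le
  have hd2 : 1 - r < ε / (2 * (C + 1)) := lt_of_lt_of_le hd1 (min_le_right _ _)
  have hmul : (1 - r) ^ 2 * T ≤ (1 - r) ^ 2 * (C + ε / 4 * ((1 - r) ^ 2)⁻¹) :=
    mul_le_mul_of_nonneg_left hTbound (by positivity)
  have heq : (1 - r) ^ 2 * (C + ε / 4 * ((1 - r) ^ 2)⁻¹) = (1 - r) ^ 2 * C + ε / 4 := by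
    field_simp
  rw [heq] at hmul
  have hCe : (1 - r) * (C + 1) < ε / 2 := by
    rw [lt_div_iff₀ (by linarith : (0 : ℝ) < 2 * (C + 1))] at hd2
    nlinarith
  have hsq : (1 - r) ^ 2 ≤ 1 - r := by nlinarith
  have h5 : (1 - r) ^ 2 * C ≤ (1 - r) * C := mul_le_mul_of_nonneg_right hsq hC0
  have h6 : (1 - r) * C ≤ (1 - r) * (C + 1) := by nlinarith
  linarith
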